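/- arXiv:2311.08384 — 2 statements merged into one kernel-verified Lean document; each statement's English description precedes it below -/
import Mathlib

section
/- Advantage approximation bound: For any policy π of a finite discounted MDP and any function f : S×A → ℝ, defining f̄(s,a) = f(s,a) − E_{a'∼π(·|s)}[f(s,a')], one has E_{(s,a)∼d^π}[(f̄(s,a) − A^π(s,a))²] ≤ 4 · E_{(s,a)∼d^π}[(f(s,a) − Q^π(s,a))²]. -/
open Finset

structure FinMDP (S A : Type*) [Fintype S] [Fintype A] where
  P : S → A → S → ℝ
  P_nonneg : ∀ s a s', 0 ≤ P s a s'
  P_sum : ∀ s a, ∑ s', P s a s' = 1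
  r : S → A → ℝ
  r_nonneg : ∀ s a, 0 ≤ r s a
  r_le_one : ∀ s a, r s a ≤ 1
  disc : ℝ
  disc_pos : 0 < disc
  disc_lt_one : disc < 1
  init : S → ℝ
  init_nonneg : ∀ s, 0 ≤ init s
  init_sum : ∑ s, init s = 1

variable {S A : Type*} [Fintype S] [Fintype A] [Nonempty S] [Nonempty A]

/-- A policy assigns to each state a probability mass function over actions. -/
def IsPolicy (π : S → A → ℝ) : Prop :=
  (∀ s a, 0 ≤ π s a) ∧ ∀ s, ∑ a, π s a = 1

/-- The Bellman operator `T^π`. -/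
noncomputable def FinMDP.bellman (M : FinMDP S A) (π f : S → A → ℝ) (s : S) (a : A) : ℝ :=
  M.r s a + M.disc * ∑ s', M.P s a s' * ∑ a', π s' a' * f s' a'

/-- `Q` is the action-value function of `π`, i.e. satisfies the Bellman equation. -/
def FinMDP.IsQ (M : FinMDP S A) (π Q : S → A → ℝ) : Prop :=
  ∀ s a, Q s a = M.bellman π Q s a

/-- The state value `V^π(s)` induced by a `Q`-function. -/
noncomputable def vOf (π Q : S → A → ℝ) (s : S) : ℝ := ∑ a, π s a * Q s a

/-- The scalar value `V^π = E_{s ∼ μ₀}[V^π(s)]`. -/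
noncomputable def FinMDP.scalarV (M : FinMDP S A) (π Q : S → A → ℝ) : ℝ :=
  ∑ s, M.init s * vOf π Q s

/-- Distribution of the state at time `t` under policy `π`. -/
noncomputable def FinMDP.stateDist (M : FinMDP S A) (π : S → A → ℝ) : ℕ → S → ℝ
  | 0 => M.init
  | (t + 1) => fun s' => ∑ s, ∑ a, FinMDP.stateDist M π t s * π s a * M.P s a s'

/-- The discounted occupancy measure `d^π(s,a) = (1-γ) ∑_t γ^t Pr^π(s_t = s, a_t = a)`. -/
noncomputable def FinMDP.occ (M : FinMDP S A) (π : S → A → ℝ) (s : S) (a : A) : ℝ :=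
  (1 - M.disc) * ∑' t : ℕ, M.disc ^ t * M.stateDist π t s * π s a

lemma stateDist_nonneg' (M : FinMDP S A) (π : S → A → ℝ) (hπ : IsPolicy π) :
    ∀ t s, 0 ≤ M.stateDist π t s := by
  intro t
  induction t with
  | zero => exact M.init_nonneg
  | succ t ih =>
    intro s'
    apply Finset.sum_nonneg; intro s _
    apply Finset.sum_nonneg; intro a _
    exact mul_nonneg (mul_nonneg (ih s) (hπ.1 s a)) (M.P_nonneg s a s')

/-- Advantage approximation bound. -/
theorem stmt9 (M : FinMDP S A) (π Q f : S → A → ℝ) (hπ : IsPolicy π) (hQ : M.IsQ π Q) :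
    ∑ s, ∑ a, M.occ π s a *
        ((f s a - ∑ a', π s a' * f s a') - (Q s a - vOf π Q s)) ^ 2
      ≤ 4 * ∑ s, ∑ a, M.occ π s a * (f s a - Q s a) ^ 2 := by
  rw [Finset.mul_sum]
  apply Finset.sum_le_sum
  intro s _
  set w := (1 - M.disc) * ∑' t : ℕ, M.disc ^ t * M.stateDist π t s with hw
  have hwnn : 0 ≤ w := by
    apply mul_nonneg
    · linarith [M.disc_lt_one]
    · exact tsum_nonneg fun t => mul_nonneg (pow_nonneg M.disc_pos.le t)
        (stateDist_nonneg' M π hπ t s)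
  have hocc : ∀ a, M.occ π s a = w * π s a := by
    intro a
    unfold FinMDP.occ
    rw [hw, mul_assoc, ← tsum_mul_right]
  set g : A → ℝ := fun a => f s a - Q s a with hg
  set gb : ℝ := ∑ a, π s a * g a with hgb
  have hkey : ∀ a, (f s a - ∑ a', π s a' * f s a') - (Q s a - vOf π Q s) = g a - gb := by
    intro a
    have : gb = (∑ a', π s a' * f s a') - vOf π Q s := by
      rw [hgb, vOf, ← Finset.sum_sub_distrib]
      congr 1; ext a'; rw [hg]; ring
    rw [this, hg]; ring
  simp_rw [hkey, hocc, mul_assoc, ← Finset.mul_sum]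
  have h1 : ∑ a, π s a * (g a - gb) ^ 2 = (∑ a, π s a * g a ^ 2) - gb ^ 2 := by
    have he : ∀ a ∈ Finset.univ, π s a * (g a - gb) ^ 2
        = π s a * g a ^ 2 - 2 * gb * (π s a * g a) + gb ^ 2 * π s a := by
      intro a _; ring
    rw [Finset.sum_congr rfl he, Finset.sum_add_distrib, Finset.sum_sub_distrib,
      ← Finset.mul_sum, ← Finset.mul_sum, hπ.2 s, ← hgb]
    ring
  have h2 : 0 ≤ ∑ a, π s a * g a ^ 2 :=
    Finset.sum_nonneg fun a _ => mul_nonneg (hπ.1 s a) (sq_nonneg _)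
  have h3 : ∑ a, π s a * (g a - gb) ^ 2 ≤ 4 * ∑ a, π s a * g a ^ 2 := by
    rw [h1]; nlinarith [sq_nonneg gb]
  calc w * ∑ a, π s a * (g a - gb) ^ 2 ≤ w * (4 * ∑ a, π s a * g a ^ 2) :=
        mul_le_mul_of_nonneg_left h3 hwnn
    _ = 4 * (w * ∑ a, π s a * g a ^ 2) := by ring
end

section
/- Per-round NPG suboptimality bound: Let π and π^e be policies of a finite discounted MDP, let C ≥ 0 satisfy d^{π^e}(s,a) ≤ C·d^π(s,a) for all (s,a), and let f : S×A → ℝ satisfy E_{(s,a)∼d^π}[(f(s,a) − Q^π(s,a))²] ≤ Δ. Then V^{π^e} − V^π ≤ (1/(1−γ)) · E_{(s,a)∼d^{π^e}}[f(s,a) − f(s, π(s))] + (2/(1−γ)) · √(C·Δ). -/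
open Finset

set_option linter.unusedSectionVars false

variable {S A : Type*} [Fintype S] [Fintype A] [Nonempty S] [Nonempty A]

-- ## helpers

lemma sd_nonneg (M : FinMDP S A) {ρ : S → A → ℝ} (hρ : IsPolicy ρ) :
    ∀ t s, 0 ≤ M.stateDist ρ t s := by
  intro t
  induction t with
  | zero => exact M.init_nonneg
  | succ t ih =>
    intro s'
    refine Finset.sum_nonneg fun s _ => Finset.sum_nonneg fun a _ => ?_
    exact mul_nonneg (mul_nonneg (ih s) (hρ.1 s a)) (M.P_nonneg s a s')

lemma sd_sum (M : FinMDP S A) {ρ : S → A → ℝ} (hρ : IsPolicy ρ) :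
    ∀ t, ∑ s, M.stateDist ρ t s = 1 := by
  intro t
  induction t with
  | zero => exact M.init_sum
  | succ t ih =>
    show ∑ s', ∑ s, ∑ a, M.stateDist ρ t s * ρ s a * M.P s a s' = 1
    rw [Finset.sum_comm]
    calc ∑ s, ∑ s', ∑ a, M.stateDist ρ t s * ρ s a * M.P s a s'
        = ∑ s, ∑ a, ∑ s', M.stateDist ρ t s * ρ s a * M.P s a s' := by
          exact Finset.sum_congr rfl fun s _ => Finset.sum_comm
      _ = ∑ s, ∑ a, M.stateDist ρ t s * ρ s a := by
          refine Finset.sum_congr rfl fun s _ => Finset.sum_congr rfl fun a _ => ?_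
          rw [← Finset.mul_sum, M.P_sum, mul_one]
      _ = ∑ s, M.stateDist ρ t s := by
          refine Finset.sum_congr rfl fun s _ => ?_
          rw [← Finset.mul_sum, hρ.2, mul_one]
      _ = 1 := ih

lemma sd_le_one (M : FinMDP S A) {ρ : S → A → ℝ} (hρ : IsPolicy ρ) (t : ℕ) (s : S) :
    M.stateDist ρ t s ≤ 1 := by
  rw [← sd_sum M hρ t]
  exact Finset.single_le_sum (fun s _ => sd_nonneg M hρ t s) (Finset.mem_univ s)

lemma bellman_expand (M : FinMDP S A) {π Q ρ : S → A → ℝ} (hQ : M.IsQ π Q) (t : ℕ) :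
    ∑ s, ∑ a, M.stateDist ρ t s * ρ s a * Q s a
      = (∑ s, ∑ a, M.stateDist ρ t s * ρ s a * M.r s a)
        + M.disc * ∑ s', M.stateDist ρ (t + 1) s' * vOf π Q s' := by
  have h1 : ∑ s', M.stateDist ρ (t + 1) s' * vOf π Q s'
      = ∑ s, ∑ a, M.stateDist ρ t s * ρ s a * ∑ s', M.P s a s' * vOf π Q s' := by
    show ∑ s', (∑ s, ∑ a, M.stateDist ρ t s * ρ s a * M.P s a s') * vOf π Q s' = _
    simp only [Finset.sum_mul, Finset.mul_sum]
    rw [Finset.sum_comm]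
    refine Finset.sum_congr rfl fun s _ => ?_
    rw [Finset.sum_comm]
    exact Finset.sum_congr rfl fun a _ => Finset.sum_congr rfl fun s' _ => by ring
  rw [h1]
  rw [Finset.mul_sum, ← Finset.sum_add_distrib]
  refine Finset.sum_congr rfl fun s _ => ?_
  rw [Finset.mul_sum, ← Finset.sum_add_distrib]
  refine Finset.sum_congr rfl fun a _ => ?_
  rw [hQ s a]
  show _ * (M.r s a + M.disc * ∑ s', M.P s a s' * ∑ a', π s' a' * Q s' a') = _
  have : ∀ s', (∑ a', π s' a' * Q s' a') = vOf π Q s' := fun _ => rfl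
  simp only [this]
  ring

lemma q_abs_le (Q : S → A → ℝ) (s : S) (a : A) : |Q s a| ≤ ∑ s', ∑ a', |Q s' a'| := by
  calc |Q s a| ≤ ∑ a', |Q s a'| :=
        Finset.single_le_sum (f := fun a' => |Q s a'|) (fun _ _ => abs_nonneg _)
          (Finset.mem_univ a)
    _ ≤ ∑ s', ∑ a', |Q s' a'| :=
        Finset.single_le_sum (f := fun s' => ∑ a', |Q s' a'|)
          (fun _ _ => Finset.sum_nonneg fun _ _ => abs_nonneg _) (Finset.mem_univ s)

lemma vOf_abs_le {π : S → A → ℝ} (hπ : IsPolicy π) (Q : S → A → ℝ) (s : S) :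
    |vOf π Q s| ≤ ∑ s', ∑ a', |Q s' a'| := by
  calc |vOf π Q s| ≤ ∑ a, |π s a * Q s a| := Finset.abs_sum_le_sum_abs _ _
    _ ≤ ∑ a, π s a * (∑ s', ∑ a', |Q s' a'|) := by
        refine Finset.sum_le_sum fun a _ => ?_
        rw [abs_mul, abs_of_nonneg (hπ.1 s a)]
        exact mul_le_mul_of_nonneg_left (q_abs_le Q s a) (hπ.1 s a)
    _ = ∑ s', ∑ a', |Q s' a'| := by rw [← Finset.sum_mul, hπ.2, one_mul]

lemma dist_avg_abs_le (M : FinMDP S A) {ρ : S → A → ℝ} (hρ : IsPolicy ρ) (t : ℕ)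
    (v : S → ℝ) (m : ℝ) (hv : ∀ s, |v s| ≤ m) :
    |∑ s, M.stateDist ρ t s * v s| ≤ m := by
  calc |∑ s, M.stateDist ρ t s * v s| ≤ ∑ s, |M.stateDist ρ t s * v s| :=
        Finset.abs_sum_le_sum_abs _ _
    _ ≤ ∑ s, M.stateDist ρ t s * m := by
        refine Finset.sum_le_sum fun s _ => ?_
        rw [abs_mul, abs_of_nonneg (sd_nonneg M hρ t s)]
        exact mul_le_mul_of_nonneg_left (hv s) (sd_nonneg M hρ t s)
    _ = m := by rw [← Finset.sum_mul, sd_sum M hρ t, one_mul]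

lemma pdl_hasSum (M : FinMDP S A) {π πe Q Qe : S → A → ℝ}
    (hπ : IsPolicy π) (hπe : IsPolicy πe) (hQ : M.IsQ π Q) (hQe : M.IsQ πe Qe) :
    HasSum (fun t => M.disc ^ t *
        ∑ s, ∑ a, M.stateDist πe t s * πe s a * (Q s a - vOf π Q s))
      (M.scalarV πe Qe - M.scalarV π Q) := by
  set γ := M.disc with hγ
  have hγ0 : 0 < γ := M.disc_pos
  have hγ1 : γ < 1 := M.disc_lt_one
  set d : ℕ → S → ℝ := M.stateDist πe with hd
  set E : ℕ → ℝ := fun t => ∑ s, d t s * vOf π Q s with hE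
  set Ee : ℕ → ℝ := fun t => ∑ s, d t s * vOf πe Qe s with hEe
  set R : ℕ → ℝ := fun t => ∑ s, ∑ a, d t s * πe s a * M.r s a with hR
  set term : ℕ → ℝ := fun t => ∑ s, ∑ a, d t s * πe s a * (Q s a - vOf π Q s) with hterm
  -- recursion for Ee
  have hEerec : ∀ t, Ee t = R t + γ * Ee (t + 1) := by
    intro t
    have h2 : Ee t = ∑ s, ∑ a, d t s * πe s a * Qe s a := by
      refine Finset.sum_congr rfl fun s _ => ?_
      rw [vOf, Finset.mul_sum]
      exact Finset.sum_congr rfl fun a _ => by ring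
    rw [h2, bellman_expand M hQe t]
  -- term formula
  have htermf : ∀ t, term t = R t + γ * E (t + 1) - E t := by
    intro t
    have h3 : ∑ s, ∑ a, d t s * πe s a * vOf π Q s = E t := by
      refine Finset.sum_congr rfl fun s _ => ?_
      rw [← Finset.sum_mul, ← Finset.mul_sum]
      rw [show (∑ a, πe s a) = 1 from hπe.2 s]
      ring
    have h4 : term t = (∑ s, ∑ a, d t s * πe s a * Q s a)
        - ∑ s, ∑ a, d t s * πe s a * vOf π Q s := by
      rw [hterm]
      rw [← Finset.sum_sub_distrib]
      refine Finset.sum_congr rfl fun s _ => ?_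
      rw [← Finset.sum_sub_distrib]
      exact Finset.sum_congr rfl fun a _ => by ring
    rw [h4, h3, bellman_expand M hQ t]
  -- partial sums
  have hpart : ∀ N, ∑ t ∈ Finset.range N, γ ^ t * term t
      = (Ee 0 - E 0) + γ ^ N * (E N - Ee N) := by
    intro N
    induction N with
    | zero => simp
    | succ N ih =>
      rw [Finset.sum_range_succ, ih, htermf N]
      have := hEerec N
      have hRN : R N = Ee N - γ * Ee (N + 1) := by linarith
      rw [hRN]
      ring
  -- bounds
  set mQ : ℝ := ∑ s, ∑ a, |Q s a| with hmQ
  set mQe : ℝ := ∑ s, ∑ a, |Qe s a| with hmQe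
  have hEb : ∀ t, |E t| ≤ mQ := fun t =>
    dist_avg_abs_le M hπe t _ mQ (fun s => vOf_abs_le hπ Q s)
  have hEeb : ∀ t, |Ee t| ≤ mQe := fun t =>
    dist_avg_abs_le M hπe t _ mQe (fun s => vOf_abs_le hπe Qe s)
  have htermb : ∀ t, |term t| ≤ 2 * mQ := by
    intro t
    have : term t = ∑ s, d t s * (∑ a, πe s a * (Q s a - vOf π Q s)) := by
      refine Finset.sum_congr rfl fun s _ => ?_
      rw [Finset.mul_sum]
      exact Finset.sum_congr rfl fun a _ => by ring
    rw [this]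
    refine dist_avg_abs_le M hπe t _ (2 * mQ) fun s => ?_
    calc |∑ a, πe s a * (Q s a - vOf π Q s)|
        ≤ ∑ a, |πe s a * (Q s a - vOf π Q s)| := Finset.abs_sum_le_sum_abs _ _
      _ ≤ ∑ a, πe s a * (2 * mQ) := by
          refine Finset.sum_le_sum fun a _ => ?_
          rw [abs_mul, abs_of_nonneg (hπe.1 s a)]
          refine mul_le_mul_of_nonneg_left ?_ (hπe.1 s a)
          calc |Q s a - vOf π Q s| ≤ |Q s a| + |vOf π Q s| := abs_sub _ _
            _ ≤ mQ + mQ := add_le_add (q_abs_le Q s a) (vOf_abs_le hπ Q s)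
            _ = 2 * mQ := by ring
      _ = 2 * mQ := by rw [← Finset.sum_mul, hπe.2, one_mul]
  -- summability
  have hsumm : Summable (fun t => γ ^ t * term t) := by
    refine Summable.of_norm_bounded (g := fun t => (2 * mQ) * γ ^ t) ?_ ?_
    · exact (summable_geometric_of_lt_one hγ0.le hγ1).mul_left _
    · intro t
      rw [Real.norm_eq_abs, abs_mul, abs_pow, abs_of_nonneg hγ0.le]
      show γ ^ t * |term t| ≤ 2 * mQ * γ ^ t
      rw [mul_comm ((2:ℝ) * mQ) (γ ^ t)]
      exact mul_le_mul_of_nonneg_left (htermb t) (pow_nonneg hγ0.le t)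
  -- the limit of partial sums
  have hlim : Filter.Tendsto (fun N => ∑ t ∈ Finset.range N, γ ^ t * term t)
      Filter.atTop (nhds (Ee 0 - E 0)) := by
    simp only [hpart]
    have h0 : Filter.Tendsto (fun N : ℕ => γ ^ N * (E N - Ee N)) Filter.atTop (nhds 0) := by
      refine squeeze_zero_norm (a := fun N : ℕ => (mQ + mQe) * γ ^ N) ?_ ?_
      · intro N
        rw [Real.norm_eq_abs, abs_mul, abs_pow, abs_of_nonneg hγ0.le, mul_comm]
        refine mul_le_mul_of_nonneg_right ?_ (pow_nonneg hγ0.le N)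
        calc |E N - Ee N| ≤ |E N| + |Ee N| := abs_sub _ _
          _ ≤ mQ + mQe := add_le_add (hEb N) (hEeb N)
      · rw [show (0:ℝ) = (mQ + mQe) * 0 by ring]
        exact (tendsto_pow_atTop_nhds_zero_of_lt_one hγ0.le hγ1).const_mul _
    have := Filter.Tendsto.const_add (Ee 0 - E 0) h0
    simpa using this
  have hhs : HasSum (fun t => γ ^ t * term t) (Ee 0 - E 0) :=
    (hsumm.hasSum_iff_tendsto_nat).mpr hlim
  have hE0 : E 0 = M.scalarV π Q := rfl
  have hEe0 : Ee 0 = M.scalarV πe Qe := rfl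
  rw [hE0, hEe0] at hhs
  exact hhs

lemma occ_inner_summable (M : FinMDP S A) {ρ : S → A → ℝ} (hρ : IsPolicy ρ)
    (g : S → A → ℝ) (s : S) (a : A) :
    Summable (fun t : ℕ => M.disc ^ t * M.stateDist ρ t s * ρ s a * g s a) := by
  have hγ0 := M.disc_pos
  have hγ1 := M.disc_lt_one
  refine Summable.of_norm_bounded (g := fun t => |ρ s a * g s a| * M.disc ^ t) ?_ ?_
  · exact (summable_geometric_of_lt_one hγ0.le hγ1).mul_left _
  · intro t
    rw [Real.norm_eq_abs]
    calc |M.disc ^ t * M.stateDist ρ t s * ρ s a * g s a|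
        = M.disc ^ t * M.stateDist ρ t s * |ρ s a * g s a| := by
          rw [mul_assoc, abs_mul, abs_mul, abs_pow, abs_of_nonneg hγ0.le,
            abs_of_nonneg (sd_nonneg M hρ t s), mul_assoc]
      _ ≤ M.disc ^ t * 1 * |ρ s a * g s a| := by
          refine mul_le_mul_of_nonneg_right ?_ (abs_nonneg _)
          exact mul_le_mul_of_nonneg_left (sd_le_one M hρ t s) (pow_nonneg hγ0.le t)
      _ = |ρ s a * g s a| * M.disc ^ t := by ring
  
lemma occ_weighted (M : FinMDP S A) {ρ : S → A → ℝ} (hρ : IsPolicy ρ) (g : S → A → ℝ) :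
    ∑ s, ∑ a, M.occ ρ s a * g s a
      = (1 - M.disc) * ∑' t : ℕ, M.disc ^ t * ∑ s, ∑ a, M.stateDist ρ t s * ρ s a * g s a := by
  have h1 : ∀ s a, M.occ ρ s a * g s a
      = (1 - M.disc) * ∑' t : ℕ, M.disc ^ t * M.stateDist ρ t s * ρ s a * g s a := by
    intro s a
    rw [FinMDP.occ, mul_assoc, ← tsum_mul_right]
  simp only [h1, ← Finset.mul_sum]
  congr 1
  have hsm : ∀ s a, Summable (fun t : ℕ => M.disc ^ t * M.stateDist ρ t s * ρ s a * g s a) :=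
    occ_inner_summable M hρ g
  have h2 : ∀ s, ∑ a, ∑' t : ℕ, M.disc ^ t * M.stateDist ρ t s * ρ s a * g s a
      = ∑' t : ℕ, ∑ a, M.disc ^ t * M.stateDist ρ t s * ρ s a * g s a := by
    intro s
    exact (Summable.tsum_finsetSum (fun a _ => hsm s a)).symm
  simp only [h2]
  rw [← Summable.tsum_finsetSum (fun s _ => summable_sum (fun a _ => hsm s a))]
  refine tsum_congr fun t => ?_
  simp only [Finset.mul_sum]
  exact Finset.sum_congr rfl fun s _ => Finset.sum_congr rfl fun a _ => by ring

lemma occ_nonneg (M : FinMDP S A) {ρ : S → A → ℝ} (hρ : IsPolicy ρ) (s : S) (a : A) :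
    0 ≤ M.occ ρ s a := by
  have hγ1 := M.disc_lt_one
  refine mul_nonneg (by linarith) (tsum_nonneg fun t => ?_)
  exact mul_nonneg (mul_nonneg (pow_nonneg M.disc_pos.le t) (sd_nonneg M hρ t s)) (hρ.1 s a)

lemma occ_sum_one (M : FinMDP S A) {ρ : S → A → ℝ} (hρ : IsPolicy ρ) :
    ∑ s, ∑ a, M.occ ρ s a = 1 := by
  have hγ0 := M.disc_pos
  have hγ1 := M.disc_lt_one
  have := occ_weighted M hρ (fun _ _ => (1:ℝ))
  simp only [mul_one] at this
  rw [this]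
  have h1 : ∀ t : ℕ, ∑ s, ∑ a, M.stateDist ρ t s * ρ s a = 1 := by
    intro t
    calc ∑ s, ∑ a, M.stateDist ρ t s * ρ s a = ∑ s, M.stateDist ρ t s := by
          refine Finset.sum_congr rfl fun s _ => ?_
          rw [← Finset.mul_sum, hρ.2, mul_one]
      _ = 1 := sd_sum M hρ t
  simp only [h1, mul_one]
  rw [tsum_geometric_of_lt_one hγ0.le hγ1]
  have : 1 - M.disc ≠ 0 := by linarith
  field_simp

lemma occ_factor (M : FinMDP S A) {ρ : S → A → ℝ} (hρ : IsPolicy ρ) (s : S) (a : A) :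
    M.occ ρ s a = (∑ a', M.occ ρ s a') * ρ s a := by
  have hfac : ∀ b, M.occ ρ s b
      = ((1 - M.disc) * ∑' t : ℕ, M.disc ^ t * M.stateDist ρ t s) * ρ s b := by
    intro b
    rw [FinMDP.occ, mul_assoc, ← tsum_mul_right]
  rw [hfac a]
  congr 1
  simp only [hfac]
  rw [← Finset.mul_sum, hρ.2, mul_one]

lemma cs_bound {ι : Type*} [Fintype ι] (w x : ι → ℝ) (hw : ∀ i, 0 ≤ w i)
    (hw1 : ∑ i, w i = 1) (B : ℝ) (hB : ∑ i, w i * (x i) ^ 2 ≤ B) :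
    ∑ i, w i * x i ≤ Real.sqrt B := by
  have h2 : (∑ i, w i * x i) ^ 2 ≤ B := by
    calc (∑ i, w i * x i) ^ 2
        = (∑ i, Real.sqrt (w i) * (Real.sqrt (w i) * x i)) ^ 2 := by
          congr 1
          refine Finset.sum_congr rfl fun i _ => ?_
          rw [← mul_assoc, Real.mul_self_sqrt (hw i)]
      _ ≤ (∑ i, Real.sqrt (w i) ^ 2) * ∑ i, (Real.sqrt (w i) * x i) ^ 2 :=
          Finset.sum_mul_sq_le_sq_mul_sq _ _ _
      _ = (∑ i, w i) * ∑ i, w i * x i ^ 2 := by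
          congr 1
          · exact Finset.sum_congr rfl fun i _ => Real.sq_sqrt (hw i)
          · refine Finset.sum_congr rfl fun i _ => ?_
            rw [mul_pow, Real.sq_sqrt (hw i)]
      _ ≤ B := by rw [hw1, one_mul]; exact hB
  calc ∑ i, w i * x i ≤ |∑ i, w i * x i| := le_abs_self _
    _ = Real.sqrt ((∑ i, w i * x i) ^ 2) := (Real.sqrt_sq_eq_abs _).symm
    _ ≤ Real.sqrt B := Real.sqrt_le_sqrt h2

/-- Per-round NPG suboptimality bound. -/
theorem stmt10 (M : FinMDP S A) (π πe Q Qe f : S → A → ℝ)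
    (hπ : IsPolicy π) (hπe : IsPolicy πe) (hQ : M.IsQ π Q) (hQe : M.IsQ πe Qe)
    (C : ℝ) (hC : 0 ≤ C) (hcov : ∀ s a, M.occ πe s a ≤ C * M.occ π s a)
    (Δ : ℝ) (hΔ : ∑ s, ∑ a, M.occ π s a * (f s a - Q s a) ^ 2 ≤ Δ) :
    M.scalarV πe Qe - M.scalarV π Q ≤
      (1 / (1 - M.disc)) * (∑ s, ∑ a, M.occ πe s a * (f s a - ∑ a', π s a' * f s a'))
      + (2 / (1 - M.disc)) * Real.sqrt (C * Δ) := by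
  have hγ1 := M.disc_lt_one
  have h1γ : 0 < 1 - M.disc := by linarith
  -- performance difference lemma
  have hPDL : ∑ s, ∑ a, M.occ πe s a * (Q s a - vOf π Q s)
      = (1 - M.disc) * (M.scalarV πe Qe - M.scalarV π Q) := by
    rw [occ_weighted M hπe]
    congr 1
    exact (pdl_hasSum M hπ hπe hQ hQe).tsum_eq
  -- notation
  set T : ℝ := ∑ s, ∑ a, M.occ πe s a * (f s a - ∑ a', π s a' * f s a') with hT
  set X1 : ℝ := ∑ s, ∑ a, M.occ πe s a * (Q s a - f s a) with hX1
  set X2 : ℝ := ∑ s, ∑ b, ((∑ a, M.occ πe s a) * π s b) * (f s b - Q s b) with hX2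
  -- decomposition
  have hsub : ∀ s, (∑ a', π s a' * (f s a' - Q s a'))
      = (∑ a', π s a' * f s a') - (∑ a', π s a' * Q s a') := by
    intro s
    rw [← Finset.sum_sub_distrib]
    exact Finset.sum_congr rfl fun a _ => by ring
  have hdecomp : ∑ s, ∑ a, M.occ πe s a * (Q s a - vOf π Q s) = T + X1 + X2 := by
    have hthird : ∀ s, ∑ b, ((∑ a, M.occ πe s a) * π s b) * (f s b - Q s b)
        = ∑ a, M.occ πe s a * (∑ a', π s a' * (f s a' - Q s a')) := by
      intro s
      calc ∑ b, ((∑ a, M.occ πe s a) * π s b) * (f s b - Q s b)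
          = (∑ a, M.occ πe s a) * ∑ b, π s b * (f s b - Q s b) := by
            rw [Finset.mul_sum]
            exact Finset.sum_congr rfl fun b _ => by ring
        _ = ∑ a, M.occ πe s a * ∑ a', π s a' * (f s a' - Q s a') := Finset.sum_mul _ _ _
    rw [hT, hX1, hX2]
    simp only [hthird]
    rw [← Finset.sum_add_distrib, ← Finset.sum_add_distrib]
    refine Finset.sum_congr rfl fun s _ => ?_
    rw [← Finset.sum_add_distrib, ← Finset.sum_add_distrib]
    refine Finset.sum_congr rfl fun a _ => ?_
    rw [vOf, hsub s]
    ring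
  -- bounds on the error terms
  have hΔ0 : 0 ≤ ∑ s, ∑ a, M.occ π s a * (f s a - Q s a) ^ 2 :=
    Finset.sum_nonneg fun s _ => Finset.sum_nonneg fun a _ =>
      mul_nonneg (occ_nonneg M hπ s a) (sq_nonneg _)
  have hCΔ : 0 ≤ C * Δ := mul_nonneg hC (le_trans hΔ0 hΔ)
  have hEbound : ∀ w x : S → A → ℝ, (∀ s a, 0 ≤ w s a) → (∑ s, ∑ a, w s a = 1) →
      (∀ s a, w s a ≤ C * M.occ π s a) →
      (∀ s a, x s a ^ 2 = (f s a - Q s a) ^ 2) →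
      ∑ s, ∑ a, w s a * x s a ≤ Real.sqrt (C * Δ) := by
    intro w x hw hw1 hwc hxsq
    have key := cs_bound (fun p : S × A => w p.1 p.2) (fun p : S × A => x p.1 p.2)
      (fun p => hw p.1 p.2) (by rw [Fintype.sum_prod_type]; exact hw1) (C * Δ) ?_
    · rw [Fintype.sum_prod_type] at key; exact key
    · rw [Fintype.sum_prod_type]
      calc ∑ s, ∑ a, w s a * x s a ^ 2
          ≤ ∑ s, ∑ a, C * (M.occ π s a * (f s a - Q s a) ^ 2) := by
            refine Finset.sum_le_sum fun s _ => Finset.sum_le_sum fun a _ => ?_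
            calc w s a * x s a ^ 2 ≤ (C * M.occ π s a) * x s a ^ 2 :=
                  mul_le_mul_of_nonneg_right (hwc s a) (sq_nonneg _)
              _ = C * (M.occ π s a * (f s a - Q s a) ^ 2) := by rw [hxsq s a]; ring
        _ = C * ∑ s, ∑ a, M.occ π s a * (f s a - Q s a) ^ 2 := by
            simp only [← Finset.mul_sum]
        _ ≤ C * Δ := mul_le_mul_of_nonneg_left hΔ hC
  -- bound X1
  have hX1b : X1 ≤ Real.sqrt (C * Δ) := by
    rw [hX1]
    exact hEbound (fun s a => M.occ πe s a) (fun s a => Q s a - f s a)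
      (occ_nonneg M hπe) (occ_sum_one M hπe) hcov (fun s a => by ring)
  -- bound X2
  have hX2b : X2 ≤ Real.sqrt (C * Δ) := by
    rw [hX2]
    refine hEbound (fun s b => (∑ a, M.occ πe s a) * π s b) (fun s b => f s b - Q s b)
      (fun s b => mul_nonneg (Finset.sum_nonneg fun a _ => occ_nonneg M hπe s a) (hπ.1 s b))
      ?_ ?_ (fun s a => rfl)
    · calc ∑ s, ∑ b, (∑ a, M.occ πe s a) * π s b
          = ∑ s, ∑ a, M.occ πe s a := by
            refine Finset.sum_congr rfl fun s _ => ?_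
            rw [← Finset.mul_sum, hπ.2, mul_one]
        _ = 1 := occ_sum_one M hπe
    · intro s b
      calc (∑ a, M.occ πe s a) * π s b ≤ (C * ∑ a, M.occ π s a) * π s b := by
            refine mul_le_mul_of_nonneg_right ?_ (hπ.1 s b)
            rw [Finset.mul_sum]
            exact Finset.sum_le_sum fun a _ => hcov s a
        _ = C * ((∑ a, M.occ π s a) * π s b) := by ring
        _ = C * M.occ π s b := by rw [← occ_factor M hπ s b]
  -- combine
  have hmain : (1 - M.disc) * (M.scalarV πe Qe - M.scalarV π Q)
      ≤ T + 2 * Real.sqrt (C * Δ) := by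
    rw [← hPDL, hdecomp]
    linarith
  rw [show (1 / (1 - M.disc)) * T + (2 / (1 - M.disc)) * Real.sqrt (C * Δ)
      = (T + 2 * Real.sqrt (C * Δ)) / (1 - M.disc) by field_simp]
  rw [le_div_iff₀ h1γ]
  calc (M.scalarV πe Qe - M.scalarV π Q) * (1 - M.disc)
      = (1 - M.disc) * (M.scalarV πe Qe - M.scalarV π Q) := by ring
    _ ≤ T + 2 * Real.sqrt (C * Δ) := hmain
end
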